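/- Fix λ₀ ∈ ℝ and t₀, and let t ↦ V_t be a family of bounded operators on H² of the form V_t(u,v) = (−G_t v, F_t u) with F_t, G_t bounded self-adjoint, differentiable at t₀ in operator norm. Let t ↦ w_t ∈ H₊² be a family defined for t near t₀, differentiable at t₀ in the graph norm of N*, such that (N* + V_t* − λ₀)τ w_t = 0 for each t. Then ⟨V̇*_{t₀} τ w_{t₀}, w_{t₀}⟩_{H²} = Ω(T w_{t₀}, T ẇ_{t₀}), where T is any trace operator satisfying Green's identity for A* and ẇ_{t₀}, V̇*_{t₀} denote the derivatives at t₀. -/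

import Mathlib

noncomputable section

open Function Set

namespace CSO

local notation "⟪" x ", " y "⟫" => (inner ℂ x y : ℂ)

/-- The ℓ²-direct sum `E ⊕ E`. -/
abbrev Sq (E : Type*) : Type _ := WithLp 2 (E × E)

section Pieces

variable {E F E' F' : Type*}
  [NormedAddCommGroup E] [InnerProductSpace ℂ E]
  [NormedAddCommGroup F] [InnerProductSpace ℂ F]
  [NormedAddCommGroup E'] [InnerProductSpace ℂ E']
  [NormedAddCommGroup F'] [InnerProductSpace ℂ F']

/-- Pairing map into the ℓ²-direct sum. -/
def mk2 (x y : E) : Sq E := (WithLp.equiv 2 (E × E)).symm (x, y)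

/-- First component. -/
def c1 (u : Sq E) : E := (WithLp.equiv 2 (E × E) u).1

/-- Second component. -/
def c2 (u : Sq E) : E := (WithLp.equiv 2 (E × E) u).2

/-- Transport of a product of continuous linear maps to the ℓ²-products. -/
def pm (A : E →L[ℂ] E') (B : F →L[ℂ] F') :
    WithLp 2 (E × F) →L[ℂ] WithLp 2 (E' × F') :=
  (((WithLp.prodContinuousLinearEquiv 2 ℂ E' F').symm :
      (E' × F') →L[ℂ] WithLp 2 (E' × F')).comp (A.prodMap B)).comp
    ((WithLp.prodContinuousLinearEquiv 2 ℂ E F :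
      WithLp 2 (E × F) ≃L[ℂ] (E × F)) : WithLp 2 (E × F) →L[ℂ] E × F)

/-- The continuous linear map `x ↦ (A x, B x)` into an ℓ²-direct sum. -/
def mk2L (A B : E →L[ℂ] F) : E →L[ℂ] Sq F :=
  (((WithLp.prodContinuousLinearEquiv 2 ℂ F F).symm :
      (F × F) →L[ℂ] Sq F)).comp (A.prod B)

/-- First component as a continuous linear map. -/
def c1L : Sq E →L[ℂ] E :=
  (ContinuousLinearMap.fst ℂ E E).comp
    ((WithLp.prodContinuousLinearEquiv 2 ℂ E E :
      Sq E ≃L[ℂ] (E × E)) : Sq E →L[ℂ] E × E)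

/-- Second component as a continuous linear map. -/
def c2L : Sq E →L[ℂ] E :=
  (ContinuousLinearMap.snd ℂ E E).comp
    ((WithLp.prodContinuousLinearEquiv 2 ℂ E E :
      Sq E ≃L[ℂ] (E × E)) : Sq E →L[ℂ] E × E)

/-- The involution `τ (u₁, u₂) = (u₂, u₁)`. -/
def swapL (E : Type*) [NormedAddCommGroup E] [InnerProductSpace ℂ E] :
    Sq E →L[ℂ] Sq E := mk2L c2L c1L

/-- The standard symplectic matrix `J (f₁, f₂) = (f₂, -f₁)`. -/
def Jm (E : Type*) [NormedAddCommGroup E] [InnerProductSpace ℂ E] :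
    Sq E →L[ℂ] Sq E := mk2L c2L (-c1L)

/-- The symplectic matrix `𝒥 = J ⊕ (-J)` on `𝔥⁴`. -/
def calJ (E : Type*) [NormedAddCommGroup E] [InnerProductSpace ℂ E] :
    Sq (Sq E) →L[ℂ] Sq (Sq E) := pm (Jm E) (-(Jm E))

/-- The symplectic form `ω(f, g) = ⟨f₂, g₁⟩ - ⟨f₁, g₂⟩` on `𝔥²`. -/
def om (f g : Sq E) : ℂ := ⟪c2 f, c1 g⟫ - ⟪c1 f, c2 g⟫

/-- The symplectic form
`Ω(f, g) = ⟨f₂,g₁⟩ - ⟨f₁,g₂⟩ - ⟨f₄,g₃⟩ + ⟨f₃,g₄⟩` on `𝔥⁴`. -/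
def Om (f g : Sq (Sq E)) : ℂ := om (c1 f) (c1 g) - om (c2 f) (c2 g)

/-- Orthogonal projection predicate. -/
def IsOrthProj [CompleteSpace E] (P : E →L[ℂ] E) : Prop :=
  P.comp P = P ∧ IsSelfAdjoint P

/-- The range of `P` is a Lagrangian subspace of `(𝔥², ω)`. -/
def IsLagrangianRange (P : Sq E →L[ℂ] Sq E) : Prop :=
  ∀ f, f ∈ Set.range P ↔ ∀ g ∈ Set.range P, om f g = 0

end Pieces

/-- The core data: a closed densely defined symmetric operator `A` with equal finite
deficiency indices `dim 𝔥`, whose adjoint `A*` has domain the Hilbert space `Hp = H₊`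
(with the graph inner product), realized through the embedding `e : H₊ → H` and the
bounded operator `As = A* : H₊ → H`. -/
structure Core (H 𝔥 Hp : Type*) [NormedAddCommGroup H] [InnerProductSpace ℂ H]
    [NormedAddCommGroup 𝔥] [InnerProductSpace ℂ 𝔥]
    [NormedAddCommGroup Hp] [InnerProductSpace ℂ Hp] where
  e : Hp →L[ℂ] H
  As : Hp →L[ℂ] H
  e_inj : Function.Injective e
  graph_inner : ∀ u v : Hp, ⟪u, v⟫ = ⟪e u, e v⟫ + ⟪As u, As v⟫
  domA : Submodule ℂ Hp
  dense_dom : Dense (e '' (domA : Set Hp))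
  adjoint_iff : ∀ v w : H,
      (∃ p : Hp, e p = v ∧ As p = w) ↔ ∀ u ∈ domA, ⟪As u, v⟫ = ⟪e u, w⟫
  closed_graph : IsClosed {q : H × H | ∃ p ∈ domA, e p = q.1 ∧ As p = q.2}
  defect_m : Module.finrank ℂ
      (LinearMap.ker (As.toLinearMap - Complex.I • e.toLinearMap)) = Module.finrank ℂ 𝔥
  defect_p : Module.finrank ℂ
      (LinearMap.ker (As.toLinearMap + Complex.I • e.toLinearMap)) = Module.finrank ℂ 𝔥

variable {H 𝔥 Hp : Type*}
  [NormedAddCommGroup H] [InnerProductSpace ℂ H]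
  [NormedAddCommGroup 𝔥] [InnerProductSpace ℂ 𝔥]
  [NormedAddCommGroup Hp] [InnerProductSpace ℂ Hp]

/-- The embedding `H₊² → H²`. -/
def Core.emb2 (C : Core H 𝔥 Hp) : Sq Hp →L[ℂ] Sq H := pm C.e C.e

/-- The action `(u₁,u₂) ↦ (-A* u₂, A* u₁)` (the common formula for `N` and its
extensions `𝒩`). -/
def Core.Nmax (C : Core H 𝔥 Hp) : Sq Hp →L[ℂ] Sq H :=
  mk2L ((-C.As).comp c2L) (C.As.comp c1L)

/-- The action of `N* : (u₁,u₂) ↦ (A* u₂, -A* u₁)`. -/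
def Core.NstarOp (C : Core H 𝔥 Hp) : Sq Hp →L[ℂ] Sq H := -C.Nmax

/-- The action of `(τN)* : (u₁,u₂) ↦ (A* u₁, -A* u₂)`. -/
def Core.tauNstarOp (C : Core H 𝔥 Hp) : Sq Hp →L[ℂ] Sq H :=
  mk2L (C.As.comp c1L) ((-C.As).comp c2L)

/-- Trace operator (boundary triplet map) for `A*`: bounded, surjective, and
satisfying the abstract Green identity. -/
structure IsTrace (C : Core H 𝔥 Hp) (tr : Hp →L[ℂ] Sq 𝔥) : Prop where
  surj : Function.Surjective tr
  green : ∀ u v : Hp, ⟪C.As u, C.e v⟫ - ⟪C.e u, C.As v⟫ = om (tr u) (tr v)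

/-- The doubled trace operator `T = tr ⊕ tr : H₊² → 𝔥⁴`. -/
def Top (tr : Hp →L[ℂ] Sq 𝔥) : Sq Hp →L[ℂ] Sq (Sq 𝔥) := pm tr tr

/-- `dom ⊆ H₊` is the domain of a self-adjoint extension of `A` (the extension being
the restriction of `A*` to `dom`). -/
structure IsSAExt (C : Core H 𝔥 Hp) (dom : Submodule ℂ Hp) : Prop where
  le : C.domA ≤ dom
  sa : ∀ v w : H,
      (∃ p ∈ dom, C.e p = v ∧ C.As p = w) ↔ ∀ u ∈ dom, ⟪C.As u, v⟫ = ⟪C.e u, w⟫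

/-- The bounded potential `V(u,v) = (-G v, F u)` on `H²`. -/
def Vop [CompleteSpace H] (F G : H →L[ℂ] H) : Sq H →L[ℂ] Sq H :=
  mk2L ((-G).comp c2L) (F.comp c1L)

/-- The adjoint potential `V*(u,v) = (F v, -G u)` on `H²`. -/
def VopStar [CompleteSpace H] (F G : H →L[ℂ] H) : Sq H →L[ℂ] Sq H :=
  mk2L (F.comp c2L) ((-G).comp c1L)

/-- `p ∈ dom(𝒜) × dom(ℬ)` and `(𝒩 + V - ζ) p = x`. -/
def ResSol (C : Core H 𝔥 Hp) [CompleteSpace H] (dU dV : Submodule ℂ Hp)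
    (V : Sq H →L[ℂ] Sq H) (ζ : ℂ) (p : Sq Hp) (x : Sq H) : Prop :=
  c1 p ∈ dU ∧ c2 p ∈ dV ∧ C.Nmax p + V (C.emb2 p) - ζ • C.emb2 p = x

/-- `R = (𝒩 + V - ζ)⁻¹`, viewed as a bounded operator from `H²` to `H₊²`. -/
def IsResS (C : Core H 𝔥 Hp) [CompleteSpace H] (dU dV : Submodule ℂ Hp)
    (V : Sq H →L[ℂ] Sq H) (ζ : ℂ) (R : Sq H →L[ℂ] Sq Hp) : Prop :=
  (∀ x, ResSol C dU dV V ζ (R x) x) ∧ ∀ p x, ResSol C dU dV V ζ p x → R x = p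

/-- `R = (𝒩 + V - ζ)⁻¹ ∈ B(H²)`. -/
def IsResW (C : Core H 𝔥 Hp) [CompleteSpace H] (dU dV : Submodule ℂ Hp)
    (V : Sq H →L[ℂ] Sq H) (ζ : ℂ) (R : Sq H →L[ℂ] Sq H) : Prop :=
  (∀ x, ∃ p, ResSol C dU dV V ζ p x ∧ C.emb2 p = R x) ∧
    ∀ p x, ResSol C dU dV V ζ p x → R x = C.emb2 p

/-- The spectrum of `𝒩 + V` (complement of the resolvent set). -/
def specSet (C : Core H 𝔥 Hp) [CompleteSpace H] (dU dV : Submodule ℂ Hp)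
    (V : Sq H →L[ℂ] Sq H) : Set ℂ :=
  {ζ | ¬ ∃ R : Sq H →L[ℂ] Sq Hp, IsResS C dU dV V ζ R}

/-- The resolvent `(𝒩 + V - ζ)⁻¹ : H² → H₊²` (defined by choice; `0` off the
resolvent set). -/
def resolventS (C : Core H 𝔥 Hp) [CompleteSpace H] (dU dV : Submodule ℂ Hp)
    (V : Sq H →L[ℂ] Sq H) (ζ : ℂ) : Sq H →L[ℂ] Sq Hp :=
  open Classical in
  if h : ∃ R, IsResS C dU dV V ζ R then h.choose else 0

/-- The resolvent `(𝒩 + V - ζ)⁻¹ ∈ B(H²)`. -/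
def resolventW (C : Core H 𝔥 Hp) [CompleteSpace H] (dU dV : Submodule ℂ Hp)
    (V : Sq H →L[ℂ] Sq H) (ζ : ℂ) : Sq H →L[ℂ] Sq H :=
  C.emb2.comp (resolventS C dU dV V ζ)

/-- `ζ` is an eigenvalue of `𝒩 + V`. -/
def IsEig (C : Core H 𝔥 Hp) [CompleteSpace H] (dU dV : Submodule ℂ Hp)
    (V : Sq H →L[ℂ] Sq H) (ζ : ℂ) : Prop :=
  ∃ p : Sq Hp, p ≠ 0 ∧ c1 p ∈ dU ∧ c2 p ∈ dV ∧
    C.Nmax p + V (C.emb2 p) = ζ • C.emb2 p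

/-- The one-parameter families of Hypothesis 3.1: trace operators, orthogonal
projections with Lagrangian ranges, self-adjoint extensions compatible with the
projections, and bounded self-adjoint perturbations. -/
structure IsFamily [CompleteSpace H] [CompleteSpace Hp] [FiniteDimensional ℂ 𝔥]
    (C : Core H 𝔥 Hp)
    (tr : ℝ → Hp →L[ℂ] Sq 𝔥) (P Q : ℝ → Sq 𝔥 →L[ℂ] Sq 𝔥)
    (dU dV : ℝ → Submodule ℂ Hp) (F G : ℝ → H →L[ℂ] H) : Prop where
  htr : ∀ t ∈ Icc (0:ℝ) 1, IsTrace C (tr t)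
  hP : ∀ t ∈ Icc (0:ℝ) 1, IsOrthProj (P t) ∧ IsLagrangianRange (P t)
  hQ : ∀ t ∈ Icc (0:ℝ) 1, IsOrthProj (Q t) ∧ IsLagrangianRange (Q t)
  hU : ∀ t ∈ Icc (0:ℝ) 1, IsSAExt C (dU t)
  hV : ∀ t ∈ Icc (0:ℝ) 1, IsSAExt C (dV t)
  htrU : ∀ t ∈ Icc (0:ℝ) 1, tr t '' ((dU t : Set Hp)) = Set.range (P t)
  htrV : ∀ t ∈ Icc (0:ℝ) 1, tr t '' ((dV t : Set Hp)) = Set.range (Q t)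
  hF : ∀ t ∈ Icc (0:ℝ) 1, IsSelfAdjoint (F t)
  hG : ∀ t ∈ Icc (0:ℝ) 1, IsSelfAdjoint (G t)

/-- Hypothesis 3.3: there is a point `z` in the resolvent set of `𝒩_t + V_t`
for all `t` near `t₀`. -/
def HypZ [CompleteSpace H] (C : Core H 𝔥 Hp) (dU dV : ℝ → Submodule ℂ Hp)
    (F G : ℝ → H →L[ℂ] H) (t₀ : ℝ) (z : ℂ) : Prop :=
  ∃ δ > 0, ∀ t : ℝ, |t - t₀| < δ →
    ∃ R, IsResS C (dU t) (dV t) (Vop (F t) (G t)) z R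

end CSO

namespace CSO

local notation "⟪" x ", " y "⟫" => (inner ℂ x y : ℂ)

open Filter Topology

section AuxC
variable {E F E' F' : Type*}
  [NormedAddCommGroup E] [InnerProductSpace ℂ E]
  [NormedAddCommGroup F] [InnerProductSpace ℂ F]
  [NormedAddCommGroup E'] [InnerProductSpace ℂ E']
  [NormedAddCommGroup F'] [InnerProductSpace ℂ F']

lemma c1_add' (p q : Sq E) : c1 (p + q) = c1 p + c1 q := rfl
lemma c2_add' (p q : Sq E) : c2 (p + q) = c2 p + c2 q := rfl
lemma c1_sub' (p q : Sq E) : c1 (p - q) = c1 p - c1 q := rfl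
lemma c2_sub' (p q : Sq E) : c2 (p - q) = c2 p - c2 q := rfl
lemma c1_neg' (p : Sq E) : c1 (-p) = -c1 p := rfl
lemma c2_neg' (p : Sq E) : c2 (-p) = -c2 p := rfl
lemma c1_smul' (r : ℂ) (p : Sq E) : c1 (r • p) = r • c1 p := rfl
lemma c2_smul' (r : ℂ) (p : Sq E) : c2 (r • p) = r • c2 p := rfl
lemma c1_rsmul' (r : ℝ) (p : Sq E) : c1 (r • p) = r • c1 p := rfl
lemma c2_rsmul' (r : ℝ) (p : Sq E) : c2 (r • p) = r • c2 p := rfl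
lemma c1_zero' : c1 (0 : Sq E) = 0 := rfl
lemma c2_zero' : c2 (0 : Sq E) = 0 := rfl
lemma c1_swapL' (p : Sq E) : c1 (swapL E p) = c2 p := rfl
lemma c2_swapL' (p : Sq E) : c2 (swapL E p) = c1 p := rfl
lemma inner_Sq (u v : Sq E) : ⟪u, v⟫ = ⟪c1 u, c1 v⟫ + ⟪c2 u, c2 v⟫ :=
  WithLp.prod_inner_apply u v

lemma clmApplyDeriv {E F : Type*} [NormedAddCommGroup E] [NormedSpace ℂ E]
    [NormedAddCommGroup F] [NormedSpace ℂ F]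
    {u : ℝ → E →L[ℂ] F} {u' : E →L[ℂ] F} {v : ℝ → E} {v' : E} {t₀ : ℝ}
    (hu : HasDerivAt u u' t₀) (hv : HasDerivAt v v' t₀) :
    HasDerivAt (fun t => u t (v t)) (u' (v t₀) + u t₀ v') t₀ := by
  have h1 : HasDerivAt (fun t => (u t).restrictScalars ℝ)
      ((u'.restrictScalars ℝ)) t₀ :=
    ((ContinuousLinearMap.restrictScalarsL ℂ E F ℝ ℝ).hasFDerivAt.comp_hasDerivAt t₀ hu :)
  exact (h1.clm_apply hv :)

end AuxC

section AuxCore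
variable {H 𝔥 Hp : Type*}
  [NormedAddCommGroup H] [InnerProductSpace ℂ H] [CompleteSpace H]
  [NormedAddCommGroup 𝔥] [InnerProductSpace ℂ 𝔥]
  [NormedAddCommGroup Hp] [InnerProductSpace ℂ Hp]

lemma c1_emb2' (C : Core H 𝔥 Hp) (p : Sq Hp) : c1 (C.emb2 p) = C.e (c1 p) := rfl
lemma c2_emb2' (C : Core H 𝔥 Hp) (p : Sq Hp) : c2 (C.emb2 p) = C.e (c2 p) := rfl
lemma c1_NstarOp' (C : Core H 𝔥 Hp) (p : Sq Hp) : c1 (C.NstarOp p) = C.As (c2 p) :=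
  neg_neg _
lemma c2_NstarOp' (C : Core H 𝔥 Hp) (p : Sq Hp) : c2 (C.NstarOp p) = -(C.As (c1 p)) := rfl
lemma c1_VopStar' (F G : H →L[ℂ] H) (q : Sq H) : c1 (VopStar F G q) = F (c2 q) := rfl
lemma c2_VopStar' (F G : H →L[ℂ] H) (q : Sq H) : c2 (VopStar F G q) = -(G (c1 q)) := rfl
lemma swapL_emb2' (C : Core H 𝔥 Hp) (p : Sq Hp) :
    swapL H (C.emb2 p) = C.emb2 (swapL Hp p) := rfl
lemma c1_Top' (tr : Hp →L[ℂ] Sq 𝔥) (p : Sq Hp) : c1 (Top tr p) = tr (c1 p) := rfl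
lemma c2_Top' (tr : Hp →L[ℂ] Sq 𝔥) (p : Sq Hp) : c2 (Top tr p) = tr (c2 p) := rfl

end AuxCore


/-- the `t`-crossing form identity in Lemma 4.10: for a
differentiable family `t ↦ w_t ∈ ker((N* + V_t* - λ₀)τ)`, one has
`⟨V̇*_{t₀} τ w_{t₀}, w_{t₀}⟩ = Ω(T w_{t₀}, T ẇ_{t₀})` for any trace operator `T`
satisfying Green's identity for `A*`. -/
theorem statement13
    {H 𝔥 Hp : Type*}
    [NormedAddCommGroup H] [InnerProductSpace ℂ H] [CompleteSpace H]
    [NormedAddCommGroup 𝔥] [InnerProductSpace ℂ 𝔥] [FiniteDimensional ℂ 𝔥]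
    [NormedAddCommGroup Hp] [InnerProductSpace ℂ Hp] [CompleteSpace Hp]
    (C : Core H 𝔥 Hp) (tr : Hp →L[ℂ] Sq 𝔥) (htr : IsTrace C tr)
    (lam₀ t₀ : ℝ)
    (F G : ℝ → H →L[ℂ] H)
    (hF : ∀ t, IsSelfAdjoint (F t)) (hG : ∀ t, IsSelfAdjoint (G t))
    (Vsd : Sq H →L[ℂ] Sq H)
    (hVsd : HasDerivAt (fun t => VopStar (F t) (G t)) Vsd t₀)
    (w : ℝ → Sq Hp) (wd : Sq Hp)
    (hderiv : HasDerivAt w wd t₀)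
    (heq : ∃ δ > 0, ∀ t : ℝ, |t - t₀| < δ →
      C.NstarOp (swapL Hp (w t)) + VopStar (F t) (G t) (C.emb2 (swapL Hp (w t)))
        - (lam₀ : ℂ) • C.emb2 (swapL Hp (w t)) = 0) :
    (inner ℂ (Vsd (swapL H (C.emb2 (w t₀)))) (C.emb2 (w t₀)) : ℂ) =
      Om (Top tr (w t₀)) (Top tr wd) := by
  obtain ⟨δ, hδ, hker⟩ := heq
  -- derivative of the kernel equation
  have hMw : HasDerivAt (fun t => C.emb2 (swapL Hp (w t))) (C.emb2 (swapL Hp wd)) t₀ := by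
    have h := clmApplyDeriv (hasDerivAt_const t₀ (C.emb2.comp (swapL Hp))) hderiv
    simpa using h
  have hNw : HasDerivAt (fun t => C.NstarOp (swapL Hp (w t))) (C.NstarOp (swapL Hp wd)) t₀ := by
    have h := clmApplyDeriv (hasDerivAt_const t₀ (C.NstarOp.comp (swapL Hp))) hderiv
    simpa using h
  have hVw : HasDerivAt (fun t => VopStar (F t) (G t) (C.emb2 (swapL Hp (w t))))
      (Vsd (C.emb2 (swapL Hp (w t₀))) + VopStar (F t₀) (G t₀) (C.emb2 (swapL Hp wd))) t₀ :=
    clmApplyDeriv hVsd hMw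
  have hg : HasDerivAt (fun t => C.NstarOp (swapL Hp (w t))
        + VopStar (F t) (G t) (C.emb2 (swapL Hp (w t)))
        - (lam₀ : ℂ) • C.emb2 (swapL Hp (w t)))
      (C.NstarOp (swapL Hp wd)
        + (Vsd (C.emb2 (swapL Hp (w t₀))) + VopStar (F t₀) (G t₀) (C.emb2 (swapL Hp wd)))
        - (lam₀ : ℂ) • C.emb2 (swapL Hp wd)) t₀ :=
    (hNw.add hVw).sub (hMw.const_smul ((lam₀ : ℂ)))
  have hg0 : HasDerivAt (fun t => C.NstarOp (swapL Hp (w t))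
        + VopStar (F t) (G t) (C.emb2 (swapL Hp (w t)))
        - (lam₀ : ℂ) • C.emb2 (swapL Hp (w t))) (0 : Sq H) t₀ := by
    apply (hasDerivAt_const t₀ (0 : Sq H)).congr_of_eventuallyEq
    filter_upwards [Metric.ball_mem_nhds t₀ hδ] with t ht
    exact hker t (by simpa [Real.dist_eq] using ht)
  have hgd0 : C.NstarOp (swapL Hp wd)
        + (Vsd (C.emb2 (swapL Hp (w t₀))) + VopStar (F t₀) (G t₀) (C.emb2 (swapL Hp wd)))
        - (lam₀ : ℂ) • C.emb2 (swapL Hp wd) = 0 := hg.unique hg0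
  have hO := hker t₀ (by simpa using hδ)
  -- component equations
  have hE1 : C.As (c1 wd) + c1 (Vsd (C.emb2 (swapL Hp (w t₀)))) + F t₀ (C.e (c1 wd))
      - (lam₀ : ℂ) • C.e (c2 wd) = 0 := by
    have h := congrArg c1 hgd0
    simpa only [c1_add', c1_sub', c1_smul', c1_NstarOp', c1_VopStar', c1_emb2',
      c2_emb2', c1_swapL', c2_swapL', c1_zero', add_assoc] using h
  have hE2 : -C.As (c2 wd) + c2 (Vsd (C.emb2 (swapL Hp (w t₀)))) - G t₀ (C.e (c2 wd))
      - (lam₀ : ℂ) • C.e (c1 wd) = 0 := by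
    have h := congrArg c2 hgd0
    simpa only [c2_add', c2_sub', c2_smul', c2_NstarOp', c2_VopStar', c1_emb2',
      c2_emb2', c1_swapL', c2_swapL', c2_zero', sub_eq_add_neg, add_assoc, neg_neg, c2_neg'] using h
  have hO1 : C.As (c1 (w t₀)) + F t₀ (C.e (c1 (w t₀)))
      - (lam₀ : ℂ) • C.e (c2 (w t₀)) = 0 := by
    have h := congrArg c1 hO
    simpa only [c1_add', c1_sub', c1_smul', c1_NstarOp', c1_VopStar', c1_emb2',
      c2_emb2', c1_swapL', c2_swapL', c1_zero'] using h
  have hO2 : -C.As (c2 (w t₀)) - G t₀ (C.e (c2 (w t₀)))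
      - (lam₀ : ℂ) • C.e (c1 (w t₀)) = 0 := by
    have h := congrArg c2 hO
    simpa only [c2_add', c2_sub', c2_smul', c2_NstarOp', c2_VopStar', c1_emb2',
      c2_emb2', c1_swapL', c2_swapL', c2_zero', sub_eq_add_neg, add_assoc, neg_neg, c2_neg'] using h
  -- self-adjointness of the derivative components at the relevant point
  have hslope := hasDerivAt_iff_tendsto_slope.1 hVsd
  set P₀ : Sq H := C.emb2 (swapL Hp (w t₀)) with hP₀def
  have happly : Continuous fun V : Sq H →L[ℂ] Sq H => V P₀ :=
    (ContinuousLinearMap.apply ℂ (Sq H) P₀).continuous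
  have hc1V : Continuous fun V : Sq H →L[ℂ] Sq H => c1 (V P₀) :=
    (c1L (E := H)).continuous.comp happly
  have hc2V : Continuous fun V : Sq H →L[ℂ] Sq H => c2 (V P₀) :=
    (c2L (E := H)).continuous.comp happly
  have hsym1 : ⟪c1 (Vsd P₀), c2 P₀⟫ = ⟪c2 P₀, c1 (Vsd P₀)⟫ := by
    have hc : Continuous fun V : Sq H →L[ℂ] Sq H =>
        (⟪c1 (V P₀), c2 P₀⟫ - ⟪c2 P₀, c1 (V P₀)⟫ : ℂ) :=
      (hc1V.inner continuous_const).sub (continuous_const.inner hc1V)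
    have ht := (hc.tendsto Vsd).comp hslope
    have hz : ∀ t : ℝ,
        (⟪c1 ((slope (fun s => VopStar (F s) (G s)) t₀ t) P₀), c2 P₀⟫
          - ⟪c2 P₀, c1 ((slope (fun s => VopStar (F s) (G s)) t₀ t) P₀)⟫ : ℂ) = 0 := by
      intro t
      have h1 : ∀ x y : H, ⟪F t x, y⟫ = ⟪x, F t y⟫ := fun x y => (hF t).isSymmetric x y
      have h2 : ∀ x y : H, ⟪F t₀ x, y⟫ = ⟪x, F t₀ y⟫ := fun x y => (hF t₀).isSymmetric x y
      rw [slope_def_module]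
      set_option synthInstance.maxHeartbeats 200000 in
      simp only [ContinuousLinearMap.smul_apply, ContinuousLinearMap.sub_apply,
        c1_rsmul', c1_smul', c1_sub', c1_neg', c1_VopStar', c2_emb2', c1_swapL',
        RCLike.real_smul_eq_coe_smul (K := ℂ), inner_smul_left, inner_smul_right,
        inner_sub_left, inner_sub_right,
        inner_add_left, inner_add_right, inner_neg_left, inner_neg_right,
        h1, h2, Complex.conj_ofReal, RCLike.conj_ofReal]
      all_goals ring_nf
    have := tendsto_nhds_unique (ht.congr hz) tendsto_const_nhds
    exact sub_eq_zero.mp this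
  have hsym2 : ⟪c2 (Vsd P₀), c1 P₀⟫ = ⟪c1 P₀, c2 (Vsd P₀)⟫ := by
    have hc : Continuous fun V : Sq H →L[ℂ] Sq H =>
        (⟪c2 (V P₀), c1 P₀⟫ - ⟪c1 P₀, c2 (V P₀)⟫ : ℂ) :=
      (hc2V.inner continuous_const).sub (continuous_const.inner hc2V)
    have ht := (hc.tendsto Vsd).comp hslope
    have hz : ∀ t : ℝ,
        (⟪c2 ((slope (fun s => VopStar (F s) (G s)) t₀ t) P₀), c1 P₀⟫
          - ⟪c1 P₀, c2 ((slope (fun s => VopStar (F s) (G s)) t₀ t) P₀)⟫ : ℂ) = 0 := by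
      intro t
      have h1 : ∀ x y : H, ⟪G t x, y⟫ = ⟪x, G t y⟫ := fun x y => (hG t).isSymmetric x y
      have h2 : ∀ x y : H, ⟪G t₀ x, y⟫ = ⟪x, G t₀ y⟫ := fun x y => (hG t₀).isSymmetric x y
      rw [slope_def_module]
      set_option synthInstance.maxHeartbeats 200000 in
      simp only [ContinuousLinearMap.smul_apply, ContinuousLinearMap.sub_apply,
        c2_rsmul', c2_smul', c2_sub', c2_neg', c2_VopStar', c1_emb2', c2_swapL',
        RCLike.real_smul_eq_coe_smul (K := ℂ), inner_smul_left, inner_smul_right,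
        inner_sub_left, inner_sub_right,
        inner_add_left, inner_add_right, inner_neg_left, inner_neg_right,
        h1, h2, Complex.conj_ofReal, RCLike.conj_ofReal]
      all_goals ring_nf
    have := tendsto_nhds_unique (ht.congr hz) tendsto_const_nhds
    exact sub_eq_zero.mp this
  -- Final computation
  have hFsym : ∀ x y : H, ⟪F t₀ x, y⟫ = ⟪x, F t₀ y⟫ := fun x y => (hF t₀).isSymmetric x y
  have hGsym : ∀ x y : H, ⟪G t₀ x, y⟫ = ⟪x, G t₀ y⟫ := fun x y => (hG t₀).isSymmetric x y
  have hc1P : c1 P₀ = C.e (c2 (w t₀)) := rfl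
  have hc2P : c2 P₀ = C.e (c1 (w t₀)) := rfl
  rw [hc2P] at hsym1
  rw [hc1P] at hsym2
  -- rewrite the As-values using the four equations
  have hA1 : C.As (c1 (w t₀)) = (lam₀ : ℂ) • C.e (c2 (w t₀)) - F t₀ (C.e (c1 (w t₀))) := by
    linear_combination (norm := module) hO1
  have hA2 : C.As (c2 (w t₀)) = -G t₀ (C.e (c2 (w t₀))) - (lam₀ : ℂ) • C.e (c1 (w t₀)) := by
    linear_combination (norm := module) -hO2
  have hA3 : C.As (c1 wd) = (lam₀ : ℂ) • C.e (c2 wd) - c1 (Vsd P₀) - F t₀ (C.e (c1 wd)) := by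
    linear_combination (norm := module) hE1
  have hA4 : C.As (c2 wd) = c2 (Vsd P₀) - G t₀ (C.e (c2 wd)) - (lam₀ : ℂ) • C.e (c1 wd) := by
    linear_combination (norm := module) -hE2
  have hgoalR : Om (Top tr (w t₀)) (Top tr wd)
      = om (tr (c1 (w t₀))) (tr (c1 wd)) - om (tr (c2 (w t₀))) (tr (c2 wd)) := rfl
  rw [hgoalR, ← htr.green, ← htr.green, swapL_emb2', ← hP₀def, inner_Sq, hA1, hA2, hA3, hA4]
  simp only [c1_emb2', c2_emb2', inner_sub_left, inner_sub_right, inner_smul_left,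
    inner_smul_right, inner_neg_left, inner_neg_right, Complex.conj_ofReal]
  rw [hFsym (C.e (c1 (w t₀))) (C.e (c1 wd)), hGsym (C.e (c2 (w t₀))) (C.e (c2 wd))]
  linear_combination hsym1 + hsym2

end CSO
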